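/- The transformation T defined almost everywhere on the Bernoulli shift space ({-1,1}^ℤ, μ) by (Tω)_n = y_n − y_{n−1}, where y = 2s − x, x is the two-sided simple random walk determined by ω, and s_n = sup_{m≤n} x_m, is measure preserving: μ ∘ T⁻¹ = μ. -/

import Mathlib

open MeasureTheory ProbabilityTheory Filter Set
open scoped ENNReal NNReal

noncomputable section

/-- The two-sided simple random walk determined by `ω : ℤ → ℤ`:
`x 0 = 0`, `x n = x (n-1) + ω n` for `n > 0`, `x n = x (n+1) - ω (n+1)` for `n < 0`. -/
def walk (ω : ℤ → ℤ) (n : ℤ) : ℤ :=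
  if 0 ≤ n then ∑ k ∈ Finset.Ioc 0 n, ω k else -∑ k ∈ Finset.Ioc n 0, ω k

/-- `s n = sup_{m ≤ n} x m` (junk value if the set is unbounded above). -/
def runMax (ω : ℤ → ℤ) (n : ℤ) : ℤ := sSup (walk ω '' Set.Iic n)

/-- `Ω' = {ω : s₀(ω) < ∞}`. -/
def goodSet : Set (ℤ → ℤ) := {ω | BddAbove (walk ω '' Set.Iic 0)}

/-- `y n = 2 s n - x n - 2 s 0`. -/
def ypath (ω : ℤ → ℤ) (n : ℤ) : ℤ := 2 * runMax ω n - walk ω n - 2 * runMax ω 0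

/-- The transformation `T`, `(Tω)ₙ = yₙ - yₙ₋₁`. -/
def burkeT (ω : ℤ → ℤ) (n : ℤ) : ℤ := ypath ω n - ypath ω (n - 1)

/-- Time reversal `(Rω)ₙ = ω₋ₙ`. -/
def rev (ω : ℤ → ℤ) (n : ℤ) : ℤ := ω (-n)

/-- The `k`-th iterate of `T` for `k ∈ ℤ`, with `T⁻¹ = R ∘ T ∘ R` used for negative `k`. -/
def burkeTiter (k : ℤ) (ω : ℤ → ℤ) : ℤ → ℤ :=
  if 0 ≤ k then burkeT^[k.toNat] ω else (rev ∘ burkeT ∘ rev)^[(-k).toNat] ω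

/-- The hypothesis that `μ` is the Bernoulli product measure on `{-1,1}^ℤ ⊆ ℤ^ℤ`
with `μ {ω : ωₙ = 1} = p`. -/
def IsBernoulliProduct (μ : Measure (ℤ → ℤ)) (p : ℝ) : Prop :=
  IsProbabilityMeasure μ ∧
    iIndepFun (fun (n : ℤ) (ω : ℤ → ℤ) => ω n) μ ∧
    (∀ n : ℤ, μ {ω | ω n = 1} = ENNReal.ofReal p) ∧
    (∀ n : ℤ, μ {ω | ω n = -1} = ENNReal.ofReal (1 - p))


namespace BurkeProof

lemma sum_Ioc_consec (ω : ℤ → ℤ) {a b c : ℤ} (hab : a ≤ b) (hbc : b ≤ c) :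
    ∑ i ∈ Finset.Ioc a b, ω i + ∑ i ∈ Finset.Ioc b c, ω i = ∑ i ∈ Finset.Ioc a c, ω i := by
  rw [← Finset.sum_union, Finset.Ioc_union_Ioc_eq_Ioc hab hbc]
  · rw [Finset.disjoint_left]; intro x hx hx'
    simp only [Finset.mem_Ioc] at hx hx'; omega

lemma Ioc_pred_self (n : ℤ) : Finset.Ioc (n-1) n = {n} := by
  ext i; simp only [Finset.mem_Ioc, Finset.mem_singleton]; omega

lemma walk_zero (ω : ℤ → ℤ) : walk ω 0 = 0 := by simp [walk]

/-- `g ω m k = x k - x m`, written only via coordinates in `Ioc k m`. -/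
def g (ω : ℤ → ℤ) (m k : ℤ) : ℤ := -(∑ i ∈ Finset.Ioc k m, ω i)

def qf (ω : ℤ → ℤ) (m : ℤ) : ℤ := sSup (g ω m '' Set.Iic m)

def Bdd (ω : ℤ → ℤ) (m : ℤ) : Prop := BddAbove (g ω m '' Set.Iic m)

lemma g_eq (ω : ℤ → ℤ) {m k : ℤ} (hk : k ≤ m) : g ω m k = walk ω k - walk ω m := by
  unfold walk g
  rcases le_or_gt 0 k with h0k | h0k
  · rw [if_pos h0k, if_pos (h0k.trans hk), ← sum_Ioc_consec ω h0k hk]; ring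
  · rcases le_or_gt 0 m with h0m | h0m
    · rw [if_neg (by omega), if_pos h0m, ← sum_Ioc_consec ω h0k.le h0m]; ring
    · rw [if_neg (by omega), if_neg (by omega), ← sum_Ioc_consec ω hk h0m.le]; ring

lemma g_self (ω : ℤ → ℤ) (m : ℤ) : g ω m m = 0 := by simp [g]

lemma g_succ (ω : ℤ → ℤ) {m k : ℤ} (hk : k ≤ m) :
    g ω (m+1) k = g ω m k - ω (m+1) := by
  unfold g
  rw [← sum_Ioc_consec ω hk (by omega : m ≤ m+1)]
  have : Finset.Ioc m (m+1) = {m+1} := by rw [← Ioc_pred_self (m+1)]; norm_num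
  rw [this, Finset.sum_singleton]; ring

lemma walk_sub (ω : ℤ → ℤ) (n : ℤ) : walk ω n - walk ω (n-1) = ω n := by
  have h := g_eq ω (by omega : n - 1 ≤ n)
  have : g ω n (n-1) = -ω n := by unfold g; rw [Ioc_pred_self, Finset.sum_singleton]
  omega

lemma zero_mem_img (ω : ℤ → ℤ) (m : ℤ) : (0:ℤ) ∈ g ω m '' Set.Iic m :=
  ⟨m, Set.mem_Iic.2 le_rfl, g_self ω m⟩

lemma img_nonempty (ω : ℤ → ℤ) (m : ℤ) : (g ω m '' Set.Iic m).Nonempty :=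
  ⟨0, zero_mem_img ω m⟩

lemma img_succ (ω : ℤ → ℤ) (m : ℤ) :
    g ω (m+1) '' Set.Iic (m+1) = insert 0 ((fun x => x - ω (m+1)) '' (g ω m '' Set.Iic m)) := by
  have h1 : Set.Iic (m+1) = insert (m+1) (Set.Iic m) := by
    ext k; simp only [Set.mem_Iic, Set.mem_insert_iff]; omega
  rw [h1, Set.image_insert_eq, g_self, Set.image_image]
  congr 1
  apply Set.image_congr
  intro k hk
  exact g_succ ω hk

lemma bddAbove_image_sub_iff {s : Set ℤ} {c : ℤ} :
    BddAbove ((fun x => x - c) '' s) ↔ BddAbove s := by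
  constructor
  · rintro ⟨b, hb⟩
    exact ⟨b + c, fun x hx => by have := hb (Set.mem_image_of_mem _ hx); simp at this ⊢; omega⟩
  · rintro ⟨b, hb⟩
    refine ⟨b - c, ?_⟩
    rintro y ⟨x, hx, rfl⟩
    have := hb hx; simp at this ⊢; omega

lemma Bdd_succ_iff (ω : ℤ → ℤ) (m : ℤ) : Bdd ω (m+1) ↔ Bdd ω m := by
  unfold Bdd
  rw [img_succ, bddAbove_insert, bddAbove_image_sub_iff]

lemma Bdd_iff_zero (ω : ℤ → ℤ) (m : ℤ) : Bdd ω m ↔ Bdd ω 0 := by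
  induction m using Int.induction_on with
  | zero => rfl
  | succ i ih => rw [Bdd_succ_iff]; exact ih
  | pred i ih =>
    have h2 := Bdd_succ_iff ω (-(i:ℤ)-1)
    rw [show -(i:ℤ)-1+1 = -(i:ℤ) by ring] at h2
    exact h2.symm.trans ih

lemma good_iff_Bdd (ω : ℤ → ℤ) (m : ℤ) : ω ∈ goodSet ↔ Bdd ω m := by
  rw [Bdd_iff_zero]
  unfold goodSet Bdd
  have : g ω 0 '' Set.Iic 0 = walk ω '' Set.Iic 0 := by
    apply Set.image_congr
    intro k hk
    rw [g_eq ω hk, walk_zero]; ring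
  rw [this]; rfl

lemma csSup_image_sub {s : Set ℤ} (hs : s.Nonempty) (hb : BddAbove s) (c : ℤ) :
    sSup ((fun x => x - c) '' s) = sSup s - c := by
  apply le_antisymm
  · apply csSup_le (hs.image _)
    rintro y ⟨x, hx, rfl⟩
    have := le_csSup hb hx
    simp only
    omega
  · have hb' : BddAbove ((fun x => x - c) '' s) := bddAbove_image_sub_iff.2 hb
    have : sSup s ≤ sSup ((fun x => x - c) '' s) + c := by
      apply csSup_le hs
      intro x hx
      have h2 : x - c ≤ sSup ((fun x => x - c) '' s) :=
        le_csSup hb' (Set.mem_image_of_mem (fun x => x - c) hx)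
      omega
    omega

lemma qf_nonneg {ω : ℤ → ℤ} (h : ω ∈ goodSet) (m : ℤ) : 0 ≤ qf ω m :=
  le_csSup ((good_iff_Bdd ω m).1 h) (zero_mem_img ω m)

lemma qf_succ {ω : ℤ → ℤ} (h : ω ∈ goodSet) (m : ℤ) :
    qf ω (m+1) = max (qf ω m - ω (m+1)) 0 := by
  unfold qf
  have hBdd := (good_iff_Bdd ω m).1 h
  have hb' : BddAbove ((fun x => x - ω (m+1)) '' (g ω m '' Set.Iic m)) :=
    bddAbove_image_sub_iff.2 hBdd
  have hne' : ((fun x => x - ω (m+1)) '' (g ω m '' Set.Iic m)).Nonempty :=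
    (img_nonempty ω m).image _
  rw [img_succ, csSup_insert hb' hne', csSup_image_sub (img_nonempty ω m) hBdd]
  have : ∀ a : ℤ, 0 ⊔ a = max a 0 := fun a => by omega
  exact this _

lemma csSup_image_add {s : Set ℤ} (hs : s.Nonempty) (hb : BddAbove s) (c : ℤ) :
    sSup ((fun x => x + c) '' s) = sSup s + c := by
  have := csSup_image_sub hs hb (-c)
  simp only [sub_neg_eq_add] at this
  omega

lemma runMax_eq {ω : ℤ → ℤ} (h : ω ∈ goodSet) (m : ℤ) :
    runMax ω m = qf ω m + walk ω m := by
  unfold runMax qf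
  have himg : walk ω '' Set.Iic m = (fun x => x + walk ω m) '' (g ω m '' Set.Iic m) := by
    rw [Set.image_image]
    apply Set.image_congr
    intro k hk
    rw [g_eq ω hk]; ring
  rw [himg, csSup_image_add (img_nonempty ω m) ((good_iff_Bdd ω m).1 h)]

lemma burkeT_eq {ω : ℤ → ℤ} (h : ω ∈ goodSet) (n : ℤ) :
    burkeT ω n = 2 * (qf ω n - qf ω (n-1)) + ω n := by
  have h1 := runMax_eq h n
  have h2 := runMax_eq h (n-1)
  have h3 := walk_sub ω n
  unfold burkeT ypath
  omega

/-- The "local" formula for `T` in terms of `qf (n-1)` and `ω n`. -/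
def Tg (ω : ℤ → ℤ) (n : ℤ) : ℤ := 2 * (max (qf ω (n-1) - ω n) 0 - qf ω (n-1)) + ω n

lemma burkeT_eq_Tg {ω : ℤ → ℤ} (h : ω ∈ goodSet) (n : ℤ) : burkeT ω n = Tg ω n := by
  rw [burkeT_eq h n]
  unfold Tg
  have := qf_succ h (n-1)
  rw [show n - 1 + 1 = n by ring] at this
  omega

lemma qf_pred {ω : ℤ → ℤ} (h : ω ∈ goodSet) (n : ℤ) :
    qf ω n = max (qf ω (n-1) - ω n) 0 := by
  have := qf_succ h (n-1); rw [show n - 1 + 1 = n by ring] at this; exact this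

-- ## Measurability

/-- measurability of pointwise integer sup with junk value 0 -/
lemma measurable_sSup_range {m' : MeasurableSpace (ℤ → ℤ)} {ι : Type} [Countable ι] [Nonempty ι]
    (f : ι → (ℤ → ℤ) → ℤ) (hf : ∀ i, Measurable[m'] (f i)) :
    Measurable[m'] (fun ω => sSup (Set.range (fun i => f i ω))) := by
  intro t _
  have : (fun ω => sSup (Set.range (fun i => f i ω))) ⁻¹' t =
      ⋃ v ∈ t, (fun ω => sSup (Set.range (fun i => f i ω))) ⁻¹' {v} := by
    ext ω; simp
  rw [this]
  apply MeasurableSet.biUnion (Set.to_countable t)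
  intro v _
  have hdecomp : (fun ω => sSup (Set.range (fun i => f i ω))) ⁻¹' {v} =
      ((⋂ i, {ω | f i ω ≤ v}) ∩ (⋃ i, {ω | f i ω = v})) ∪
      ({ω | ∀ b : ℤ, ∃ i, b < f i ω} ∩ {ω | (0:ℤ) = v}) := by
    ext ω
    simp only [Set.mem_preimage, Set.mem_singleton_iff, Set.mem_union, Set.mem_inter_iff,
      Set.mem_iInter, Set.mem_iUnion, Set.mem_setOf_eq]
    by_cases hbdd : BddAbove (Set.range (fun i => f i ω))
    · have hne : (Set.range (fun i => f i ω)).Nonempty := Set.range_nonempty _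
      have hmem := Int.csSup_mem hne hbdd
      constructor
      · rintro rfl
        refine Or.inl ⟨fun i => le_csSup hbdd ⟨i, rfl⟩, ?_⟩
        obtain ⟨i, hi⟩ := hmem
        exact ⟨i, hi⟩
      · rintro (⟨hub, ⟨i, hi⟩⟩ | ⟨hunb, rfl⟩)
        · exact le_antisymm (csSup_le hne (by rintro y ⟨i', rfl⟩; exact hub i')) (hi ▸ le_csSup hbdd ⟨i, rfl⟩)
        · exact absurd hbdd (by
            rw [not_bddAbove_iff]
            intro b
            obtain ⟨i, hi⟩ := hunb b
            exact ⟨f i ω, ⟨i, rfl⟩, hi⟩)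
    · have hsup : sSup (Set.range (fun i => f i ω)) = 0 := by
        rw [csSup_of_not_bddAbove hbdd, Int.csSup_empty]
      rw [hsup]
      constructor
      · rintro rfl
        refine Or.inr ⟨?_, rfl⟩
        intro b
        rw [not_bddAbove_iff] at hbdd
        obtain ⟨y, ⟨i, rfl⟩, hy⟩ := hbdd b
        exact ⟨i, hy⟩
      · rintro (⟨hub, _⟩ | ⟨_, rfl⟩)
        · exact absurd ⟨v, by rintro y ⟨i, rfl⟩; exact hub i⟩ hbdd
        · rfl
  rw [hdecomp]
  apply MeasurableSet.union
  · exact (MeasurableSet.iInter (fun i =>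
        hf i (show MeasurableSet (Set.Iic v) from trivial))).inter
      (MeasurableSet.iUnion (fun i => hf i (show MeasurableSet ({v} : Set ℤ) from trivial)))
  · have hset : {ω : ℤ → ℤ | ∀ b : ℤ, ∃ i, b < f i ω} = ⋂ b : ℤ, ⋃ i, f i ⁻¹' (Set.Ioi b) := by
      ext ω; simp [Set.mem_preimage]
    rw [hset]
    refine (MeasurableSet.iInter (fun b => MeasurableSet.iUnion (fun i =>
        hf i (show MeasurableSet (Set.Ioi b) from trivial)))).inter ?_
    by_cases h : (0:ℤ) = v
    · simp [h]
    · simp [h]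

lemma measurable_bddAbove_range {m' : MeasurableSpace (ℤ → ℤ)} {ι : Type} [Countable ι]
    (f : ι → (ℤ → ℤ) → ℤ) (hf : ∀ i, Measurable[m'] (f i)) :
    MeasurableSet[m'] {ω | BddAbove (Set.range (fun i => f i ω))} := by
  have : {ω | BddAbove (Set.range (fun i => f i ω))} =
      ⋃ b : ℤ, ⋂ i, {ω | f i ω ≤ b} := by
    ext ω
    simp only [Set.mem_setOf_eq, Set.mem_iUnion, Set.mem_iInter]
    constructor
    · rintro ⟨b, hb⟩; exact ⟨b, fun i => hb ⟨i, rfl⟩⟩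
    · rintro ⟨b, hb⟩; exact ⟨b, by rintro y ⟨i, rfl⟩; exact hb i⟩
  rw [this]
  exact MeasurableSet.iUnion fun b => MeasurableSet.iInter fun i =>
    hf i (show MeasurableSet (Set.Iic b) from trivial)

/-- the σ-algebra of the coordinates `≤ t` -/
def pastσ (t : ℤ) : MeasurableSpace (ℤ → ℤ) :=
  ⨆ i ∈ Set.Iic t, MeasurableSpace.comap (fun ω : ℤ → ℤ => ω i) ⊤

lemma pastσ_le (t : ℤ) : pastσ t ≤ (inferInstance : MeasurableSpace (ℤ → ℤ)) := by
  apply iSup_le; intro i; apply iSup_le; intro _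
  exact measurable_iff_comap_le.1 (measurable_pi_apply i)

lemma pastσ_mono {s t : ℤ} (h : s ≤ t) : pastσ s ≤ pastσ t := by
  apply iSup_le; intro i; apply iSup_le; intro hi
  exact le_iSup₂ (f := fun i (_ : i ∈ Set.Iic t) => MeasurableSpace.comap (fun ω : ℤ → ℤ => ω i) ⊤) i
    (le_trans hi h)

lemma measurable_eval_past {t i : ℤ} (h : i ≤ t) : Measurable[pastσ t] (fun ω : ℤ → ℤ => ω i) := by
  rw [measurable_iff_comap_le]
  refine le_trans ?_ (le_iSup₂ (f := fun i (_ : i ∈ Set.Iic t) => MeasurableSpace.comap (fun ω : ℤ → ℤ => ω i) ⊤) i h)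
  exact le_of_eq rfl

lemma measurable_g_past {t m k : ℤ} (hm : m ≤ t) : Measurable[pastσ t] (fun ω => g ω m k) := by
  apply Measurable.neg
  apply Finset.measurable_sum
  intro i hi
  simp only [Finset.mem_Ioc] at hi
  exact measurable_eval_past (le_trans hi.2 hm)

lemma measurable_qf_past {t m : ℤ} (hm : m ≤ t) : Measurable[pastσ t] (fun ω => qf ω m) := by
  have : (fun ω => qf ω m) = fun ω => sSup (Set.range (fun k : Set.Iic m => g ω m k)) := by
    funext ω; unfold qf; rw [Set.image_eq_range]
  rw [this]
  haveI : Nonempty (Set.Iic m) := ⟨⟨m, Set.mem_Iic.2 le_rfl⟩⟩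
  exact measurable_sSup_range (ι := Set.Iic m) _ (fun k => measurable_g_past hm)

lemma measurableSet_good_past (t : ℤ) : MeasurableSet[pastσ t] goodSet := by
  have : goodSet = {ω | BddAbove (Set.range (fun k : Set.Iic t => g ω t k))} := by
    ext ω
    rw [good_iff_Bdd ω t]
    unfold Bdd
    rw [Set.image_eq_range]
    rfl
  rw [this]
  exact measurable_bddAbove_range _ (fun k => measurable_g_past le_rfl)

lemma measurable_Tg_past {t n : ℤ} (hn : n ≤ t) : Measurable[pastσ t] (fun ω => Tg ω n) := by
  have h1 : Measurable[pastσ t] (fun ω => qf ω (n-1)) := measurable_qf_past (by omega)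
  have h2 : Measurable[pastσ t] (fun ω : ℤ → ℤ => ω n) := measurable_eval_past hn
  unfold Tg
  exact (((h1.sub h2).max measurable_const).sub h1).const_mul 2 |>.add h2

lemma measurable_walk (n : ℤ) : Measurable (fun ω => walk ω n) := by
  unfold walk
  split
  · exact Finset.measurable_sum _ (fun i _ => measurable_pi_apply i)
  · exact (Finset.measurable_sum _ (fun i _ => measurable_pi_apply i)).neg

lemma measurable_runMax (n : ℤ) : Measurable (fun ω => runMax ω n) := by
  have : (fun ω => runMax ω n) = fun ω => sSup (Set.range (fun k : Set.Iic n => walk ω k)) := by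
    funext ω; unfold runMax; rw [Set.image_eq_range]
  rw [this]
  haveI : Nonempty (Set.Iic n) := ⟨⟨n, Set.mem_Iic.2 le_rfl⟩⟩
  exact measurable_sSup_range (ι := Set.Iic n) _ (fun k => measurable_walk k)

lemma measurable_burkeT : Measurable burkeT := by
  apply measurable_pi_lambda
  intro n
  have : (fun ω => burkeT ω n) = fun ω =>
      (2 * runMax ω n - walk ω n - 2 * runMax ω 0) -
      (2 * runMax ω (n-1) - walk ω (n-1) - 2 * runMax ω 0) := by
    funext ω; rfl
  rw [this]
  exact ((((measurable_runMax n).const_mul 2).sub (measurable_walk n)).sub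
      ((measurable_runMax 0).const_mul 2)).sub
    ((((measurable_runMax (n-1)).const_mul 2).sub (measurable_walk (n-1))).sub
      ((measurable_runMax 0).const_mul 2))

-- ## Measure theory: basics

/-- single-coordinate weights -/
def W (p : ℝ) (v : ℤ) : ℝ≥0∞ :=
  if v = 1 then ENNReal.ofReal p else if v = -1 then ENNReal.ofReal (1-p) else 0

section Meas

variable {p : ℝ} {μ : MeasureTheory.Measure (ℤ → ℤ)}

lemma W_add_one (hp : 1/2 < p) (hp1 : p < 1) :
    ENNReal.ofReal p + ENNReal.ofReal (1-p) = 1 := by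
  rw [← ENNReal.ofReal_add (by linarith) (by linarith)]
  norm_num

lemma measurableSet_coord (t v : ℤ) : MeasurableSet {ω : ℤ → ℤ | ω t = v} := by
  have h : {ω : ℤ → ℤ | ω t = v} = (fun ω : ℤ → ℤ => ω t) ⁻¹' {v} := rfl
  rw [h]
  exact measurable_pi_apply t (show MeasurableSet ({v} : Set ℤ) from trivial)

lemma marg (hμ : IsBernoulliProduct μ p) (hp : 1/2 < p) (hp1 : p < 1) (t v : ℤ) :
    μ {ω | ω t = v} = W p v := by
  have hprob : IsProbabilityMeasure μ := hμ.1
  unfold W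
  by_cases h1 : v = 1
  · subst h1; rw [if_pos rfl]; exact hμ.2.2.1 t
  · rw [if_neg h1]
    by_cases h2 : v = -1
    · subst h2; rw [if_pos rfl]; exact hμ.2.2.2 t
    · rw [if_neg h2]
      have hd12 : Disjoint {ω : ℤ → ℤ | ω t = 1} {ω : ℤ → ℤ | ω t = -1} := by
        rw [Set.disjoint_left]; intro ω hω hω'; simp only [Set.mem_setOf_eq] at hω hω'; omega
      have hd3 : Disjoint ({ω : ℤ → ℤ | ω t = 1} ∪ {ω : ℤ → ℤ | ω t = -1}) {ω : ℤ → ℤ | ω t = v} := by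
        rw [Set.disjoint_left]; rintro ω (hω | hω) hω' <;>
          simp only [Set.mem_setOf_eq] at hω hω' <;> omega
      have hu : μ ({ω : ℤ → ℤ | ω t = 1} ∪ {ω : ℤ → ℤ | ω t = -1} ∪ {ω | ω t = v}) ≤ 1 :=
        prob_le_one
      rw [Set.union_assoc] at hu
      rw [measure_union (by
            rw [Set.disjoint_left]; rintro ω hω (hω' | hω') <;>
              simp only [Set.mem_setOf_eq] at hω hω' <;> omega)
          ((measurableSet_coord t (-1)).union (measurableSet_coord t v)),
        measure_union (by
            rw [Set.disjoint_left]; intro ω hω hω'; simp only [Set.mem_setOf_eq] at hω hω'; omega)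
          (measurableSet_coord t v),
        hμ.2.2.1 t, hμ.2.2.2 t, ← add_assoc, W_add_one hp hp1] at hu
      have h1' : (1 : ℝ≥0∞) + μ {ω | ω t = v} ≤ 1 + 0 := by simpa using hu
      have := (ENNReal.add_le_add_iff_left (ENNReal.one_ne_top)).1 h1'
      exact le_antisymm (by simpa using this) zero_le

/-- finite cylinder sets -/
def cylSet (F : Finset ℤ) (f : ℤ → ℤ) : Set (ℤ → ℤ) := {ω | ∀ i ∈ F, ω i = f i}

lemma cylSet_eq (F : Finset ℤ) (f : ℤ → ℤ) :
    cylSet F f = ⋂ i ∈ F, {ω : ℤ → ℤ | ω i = f i} := by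
  ext ω; simp [cylSet]

lemma measurableSet_cylSet (F : Finset ℤ) (f : ℤ → ℤ) : MeasurableSet (cylSet F f) := by
  rw [cylSet_eq]
  exact MeasurableSet.biInter (F : Set ℤ).to_countable (fun i _ => measurableSet_coord i (f i))

lemma cyl_meas (hμ : IsBernoulliProduct μ p) (hp : 1/2 < p) (hp1 : p < 1) (F : Finset ℤ) (f : ℤ → ℤ) :
    μ (cylSet F f) = ∏ i ∈ F, W p (f i) := by
  rw [cylSet_eq]
  have h := (iIndepFun_iff_measure_inter_preimage_eq_mul.1 hμ.2.1) F
    (sets := fun i => {f i}) (fun i _ => trivial)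
  have hpre : ∀ i : ℤ, (fun ω : ℤ → ℤ => ω i) ⁻¹' {f i} = {ω : ℤ → ℤ | ω i = f i} := by
    intro i; rfl
  simp only [hpre] at h
  rw [h]
  exact Finset.prod_congr rfl (fun i _ => marg hμ hp hp1 i (f i))

/-- the π-system of cylinders -/
def cylPi : Set (Set (ℤ → ℤ)) := {S | ∃ F f, S = cylSet F f}

lemma isPiSystem_cylPi : IsPiSystem cylPi := by
  rintro S ⟨F, f, rfl⟩ T ⟨G, g, rfl⟩ hne
  obtain ⟨ω₀, hω₀⟩ := hne
  refine ⟨F ∪ G, fun i => if i ∈ F then f i else g i, ?_⟩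
  have hcomp : ∀ i, i ∈ F → i ∈ G → f i = g i := by
    intro i hiF hiG
    have h1 := hω₀.1 i hiF
    have h2 := hω₀.2 i hiG
    omega
  ext ω
  simp only [cylSet, Set.mem_inter_iff, Set.mem_setOf_eq, Finset.mem_union]
  constructor
  · rintro ⟨h1, h2⟩ i hi
    by_cases hiF : i ∈ F
    · rw [if_pos hiF]; exact h1 i hiF
    · rw [if_neg hiF]; exact h2 i (hi.resolve_left hiF)
  · intro h
    constructor
    · intro i hi; have := h i (Or.inl hi); rwa [if_pos hi] at this
    · intro i hi
      have := h i (Or.inr hi)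
      by_cases hiF : i ∈ F
      · rw [if_pos hiF] at this; rw [this] at *; exact (hcomp i hiF hi).symm ▸ this
      · rwa [if_neg hiF] at this

lemma generateFrom_cylPi :
    (inferInstance : MeasurableSpace (ℤ → ℤ)) = MeasurableSpace.generateFrom cylPi := by
  apply le_antisymm
  · rw [show (inferInstance : MeasurableSpace (ℤ → ℤ)) = MeasurableSpace.pi from rfl,
      MeasurableSpace.pi]
    apply iSup_le
    intro i
    intro s hs
    obtain ⟨S, _, rfl⟩ := hs
    have : (fun ω : ℤ → ℤ => ω i) ⁻¹' S = ⋃ v ∈ S, cylSet {i} (fun _ => v) := by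
      ext ω
      simp [cylSet]
    rw [this]
    exact MeasurableSet.biUnion (Set.to_countable S)
      (fun v _ => MeasurableSpace.measurableSet_generateFrom ⟨{i}, fun _ => v, rfl⟩)
  · apply MeasurableSpace.generateFrom_le
    rintro S ⟨F, f, rfl⟩
    exact measurableSet_cylSet F f

/-- two probability measures agreeing on cylinders agree -/
lemma ext_cyl {ν₁ ν₂ : MeasureTheory.Measure (ℤ → ℤ)} [IsProbabilityMeasure ν₁]
    [IsProbabilityMeasure ν₂] (h : ∀ F f, ν₁ (cylSet F f) = ν₂ (cylSet F f)) : ν₁ = ν₂ := by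
  apply MeasureTheory.ext_of_generate_finite cylPi generateFrom_cylPi isPiSystem_cylPi
  · rintro S ⟨F, f, rfl⟩; exact h F f
  · simp


-- ## Independence from the past

lemma indep_past (hμ : IsBernoulliProduct μ p) (t : ℤ) :
    Indep (pastσ (t-1)) (MeasurableSpace.comap (fun ω : ℤ → ℤ => ω t) ⊤) μ := by
  have h_indep : iIndep (fun i : ℤ =>
      MeasurableSpace.comap (fun ω : ℤ → ℤ => ω i) ⊤) μ := hμ.2.1.iIndep
  have h_le : ∀ i : ℤ, MeasurableSpace.comap (fun ω : ℤ → ℤ => ω i) ⊤ ≤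
      (inferInstance : MeasurableSpace (ℤ → ℤ)) :=
    fun i => measurable_iff_comap_le.1 (measurable_pi_apply i)
  have h := indep_biSup_compl h_le h_indep (Set.Iic (t-1))
  refine indep_of_indep_of_le_right h ?_
  refine le_trans ?_ (le_iSup₂ (f := fun i (_ : i ∈ (Set.Iic (t-1))ᶜ) =>
    MeasurableSpace.comap (fun ω : ℤ → ℤ => ω i) ⊤) t (by simp))
  exact le_of_eq rfl

lemma indep_apply (hμ : IsBernoulliProduct μ p) (hp : 1/2 < p) (hp1 : p < 1) {t : ℤ}
    {A : Set (ℤ → ℤ)} (hA : MeasurableSet[pastσ (t-1)] A) (v : ℤ) :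
    μ (A ∩ {ω | ω t = v}) = μ A * W p v := by
  have h := (Indep_iff _ _ _).1 (indep_past hμ t) A {ω | ω t = v} hA ⟨{v}, trivial, rfl⟩
  rw [h, marg hμ hp hp1 t v]

-- ## Shift invariance and stationarity

def Sh : (ℤ → ℤ) → (ℤ → ℤ) := fun ω n => ω (n+1)

lemma measurable_Sh : Measurable Sh :=
  measurable_pi_lambda _ (fun n => measurable_pi_apply (n+1))

lemma Sh_preimage_cyl (F : Finset ℤ) (f : ℤ → ℤ) :
    Sh ⁻¹' (cylSet F f) = cylSet (F.image (· + 1)) (fun j => f (j - 1)) := by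
  ext ω
  simp only [Set.mem_preimage, cylSet, Set.mem_setOf_eq, Sh, Finset.mem_image]
  constructor
  · rintro h j ⟨i, hi, rfl⟩
    simpa using h i hi
  · intro h i hi
    have := h (i+1) ⟨i, hi, rfl⟩
    simpa using this

lemma map_Sh (hμ : IsBernoulliProduct μ p) (hp : 1/2 < p) (hp1 : p < 1) :
    μ.map Sh = μ := by
  haveI : IsProbabilityMeasure μ := hμ.1
  haveI : IsProbabilityMeasure (μ.map Sh) := Measure.isProbabilityMeasure_map measurable_Sh.aemeasurable
  apply ext_cyl
  intro F f
  rw [Measure.map_apply measurable_Sh (measurableSet_cylSet F f), Sh_preimage_cyl,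
    cyl_meas hμ hp hp1, cyl_meas hμ hp hp1]
  rw [Finset.prod_image (by intro x _ y _ h; beta_reduce at h; omega)]
  apply Finset.prod_congr rfl
  intro i _
  norm_num

lemma g_Sh (ω : ℤ → ℤ) (m k : ℤ) : g (Sh ω) m k = g ω (m+1) (k+1) := by
  unfold g Sh
  congr 1
  rw [show Finset.Ioc (k+1) (m+1) = (Finset.Ioc k m).image (· + 1) by
    ext i; simp only [Finset.mem_Ioc, Finset.mem_image]; constructor
    · intro h; exact ⟨i - 1, by omega, by omega⟩
    · rintro ⟨j, hj, rfl⟩; omega]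
  rw [Finset.sum_image (by intro x _ y _ h; beta_reduce at h; omega)]

lemma img_Sh (ω : ℤ → ℤ) (m : ℤ) :
    g (Sh ω) m '' Set.Iic m = g ω (m+1) '' Set.Iic (m+1) := by
  ext y
  constructor
  · rintro ⟨k, hk, rfl⟩
    exact ⟨k+1, by simpa using hk, (g_Sh ω m k).symm⟩
  · rintro ⟨k, hk, rfl⟩
    refine ⟨k-1, by simp at hk ⊢; omega, ?_⟩
    rw [g_Sh]
    norm_num

lemma qf_Sh (ω : ℤ → ℤ) (m : ℤ) : qf (Sh ω) m = qf ω (m+1) := by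
  unfold qf; rw [img_Sh]

lemma good_Sh (ω : ℤ → ℤ) : Sh ω ∈ goodSet ↔ ω ∈ goodSet := by
  rw [good_iff_Bdd (Sh ω) 0, good_iff_Bdd ω 1]
  unfold Bdd
  rw [img_Sh]
  norm_num

/-- the event `{ω good, qf ω m = j}` -/
def GQ (m j : ℤ) : Set (ℤ → ℤ) := goodSet ∩ {ω | qf ω m = j}

lemma measurableSet_GQ_past (m j : ℤ) : MeasurableSet[pastσ m] (GQ m j) := by
  apply (measurableSet_good_past m).inter
  have h : {ω : ℤ → ℤ | qf ω m = j} = (fun ω => qf ω m) ⁻¹' {j} := rfl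
  rw [h]
  exact measurable_qf_past le_rfl (show MeasurableSet ({j} : Set ℤ) from trivial)

lemma measurableSet_GQ (m j : ℤ) : MeasurableSet (GQ m j) :=
  pastσ_le m _ (measurableSet_GQ_past m j)

lemma Sh_preimage_GQ (m j : ℤ) : Sh ⁻¹' (GQ m j) = GQ (m+1) j := by
  ext ω
  simp only [Set.mem_preimage, GQ, Set.mem_inter_iff, Set.mem_setOf_eq, good_Sh, qf_Sh]

lemma GQ_stationary (hμ : IsBernoulliProduct μ p) (hp : 1/2 < p) (hp1 : p < 1) (m j : ℤ) :
    μ (GQ m j) = μ (GQ 0 j) := by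
  have hstep : ∀ m : ℤ, μ (GQ (m+1) j) = μ (GQ m j) := by
    intro m
    conv_rhs => rw [← map_Sh hμ hp hp1]
    rw [Measure.map_apply measurable_Sh (measurableSet_GQ m j), Sh_preimage_GQ]
  induction m using Int.induction_on with
  | zero => rfl
  | succ i ih => rw [hstep]; exact ih
  | pred i ih =>
    have := hstep (-(i:ℤ) - 1)
    rw [show -(i:ℤ) - 1 + 1 = -(i:ℤ) by ring] at this
    rw [← this]
    exact ih


-- ## The bad set is null

lemma ae_pm (hμ : IsBernoulliProduct μ p) (hp : 1/2 < p) (hp1 : p < 1) (t : ℤ) :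
    ∀ᵐ ω ∂μ, ω t = 1 ∨ ω t = -1 := by
  haveI : IsProbabilityMeasure μ := hμ.1
  have hA : MeasurableSet ({ω : ℤ → ℤ | ω t = 1} ∪ {ω : ℤ → ℤ | ω t = -1}) :=
    (measurableSet_coord t 1).union (measurableSet_coord t (-1))
  have h1 : μ ({ω : ℤ → ℤ | ω t = 1} ∪ {ω : ℤ → ℤ | ω t = -1}) = 1 := by
    rw [measure_union (by
        rw [Set.disjoint_left]; intro ω hω hω'
        simp only [Set.mem_setOf_eq] at hω hω'; omega) (measurableSet_coord t (-1)),
      hμ.2.2.1 t, hμ.2.2.2 t, W_add_one hp hp1]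
  have h0 : μ ({ω : ℤ → ℤ | ω t = 1} ∪ {ω : ℤ → ℤ | ω t = -1})ᶜ = 0 :=
    (prob_compl_eq_zero_iff hA).2 h1
  filter_upwards [MeasureTheory.measure_eq_zero_iff_ae_notMem.1 h0] with ω hω
  exact or_iff_not_imp_left.2 (by simpa using hω)

lemma sum_X_eq (ω : ℤ → ℤ) (n : ℕ) :
    ∑ i ∈ Finset.range n, (-(ω (-(i:ℤ)))) = g ω 0 (-(n:ℤ)) := by
  unfold g
  have himg : Finset.Ioc (-(n:ℤ)) 0 = (Finset.range n).image (fun i : ℕ => -(i:ℤ)) := by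
    ext j
    simp only [Finset.mem_Ioc, Finset.mem_image, Finset.mem_range]
    constructor
    · intro h
      exact ⟨(-j).toNat, by omega, by omega⟩
    · rintro ⟨i, hi, rfl⟩
      omega
  rw [himg, Finset.sum_image (by intro x _ y _ h; beta_reduce at h; omega), ← Finset.sum_neg_distrib]

lemma bad_null (hμ : IsBernoulliProduct μ p) (hp : 1/2 < p) (hp1 : p < 1) :
    μ goodSetᶜ = 0 := by
  haveI : IsProbabilityMeasure μ := hμ.1
  set X : ℕ → (ℤ → ℤ) → ℝ := fun n ω => -((ω (-(n:ℤ)) : ℤ) : ℝ) with hX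
  have hcast : Measurable (fun v : ℤ => -((v : ℤ) : ℝ)) := measurable_of_countable _
  have hXmeas : ∀ n, Measurable (X n) := fun n => hcast.comp (measurable_pi_apply _)
  have hindep : Pairwise (Function.onFun (IndepFun · · μ) X) := by
    intro i j hij
    have hij' : (-(i:ℤ)) ≠ (-(j:ℤ)) := by omega
    exact (hμ.2.1.indepFun hij').comp hcast hcast
  have hmapeval : ∀ i : ℤ, μ.map (fun ω : ℤ → ℤ => ω i) = μ.map (fun ω : ℤ → ℤ => ω 0) := by
    intro i
    apply MeasureTheory.Measure.ext_of_singleton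
    intro v
    rw [Measure.map_apply (measurable_pi_apply i) (measurableSet_singleton v),
      Measure.map_apply (measurable_pi_apply 0) (measurableSet_singleton v)]
    have h1 : (fun ω : ℤ → ℤ => ω i) ⁻¹' {v} = {ω : ℤ → ℤ | ω i = v} := rfl
    have h2 : (fun ω : ℤ → ℤ => ω 0) ⁻¹' {v} = {ω : ℤ → ℤ | ω 0 = v} := rfl
    rw [h1, h2, marg hμ hp hp1, marg hμ hp hp1]
  have hident : ∀ n, IdentDistrib (X n) (X 0) μ μ := by
    intro n
    refine ⟨(hXmeas n).aemeasurable, (hXmeas 0).aemeasurable, ?_⟩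
    show μ.map (X n) = μ.map (X 0)
    have e1 : X n = (fun v : ℤ => -((v : ℤ) : ℝ)) ∘ (fun ω : ℤ → ℤ => ω (-(n:ℤ))) := rfl
    have e2 : X 0 = (fun v : ℤ => -((v : ℤ) : ℝ)) ∘ (fun ω : ℤ → ℤ => ω (-(0:ℤ))) := rfl
    rw [e1, e2, ← Measure.map_map hcast (measurable_pi_apply _),
      ← Measure.map_map hcast (measurable_pi_apply _), hmapeval, hmapeval]
    norm_num
  have hint : Integrable (X 0) μ := by
    refine (integrable_const (1:ℝ)).mono' (hXmeas 0).aestronglyMeasurable ?_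
    filter_upwards [ae_pm hμ hp hp1 0] with ω hω
    rcases hω with h | h <;> simp [hX, h]
  have hEX : μ[X 0] = 1 - 2*p := by
    have hcongr : X 0 =ᵐ[μ] fun ω =>
        ({ω : ℤ → ℤ | ω 0 = -1}.indicator (fun _ => (1:ℝ)) ω -
         {ω : ℤ → ℤ | ω 0 = 1}.indicator (fun _ => (1:ℝ)) ω) := by
      filter_upwards [ae_pm hμ hp hp1 0] with ω hω
      rcases hω with h | h <;>
        simp [hX, h, Set.indicator_apply, Set.mem_setOf_eq]
    rw [integral_congr_ae hcongr, integral_sub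
      ((integrable_const (1:ℝ)).indicator (measurableSet_coord 0 (-1)))
      ((integrable_const (1:ℝ)).indicator (measurableSet_coord 0 1)),
      integral_indicator_const _ (measurableSet_coord 0 (-1)),
      integral_indicator_const _ (measurableSet_coord 0 1),
      measureReal_def, measureReal_def, marg hμ hp hp1 0 (-1), marg hμ hp hp1 0 1]
    unfold W
    norm_num
    rw [ENNReal.toReal_ofReal (by linarith), ENNReal.toReal_ofReal (by linarith)]
    ring
  have hSLLN := strong_law_ae_real X hint hindep hident
  rw [hEX] at hSLLN
  rw [MeasureTheory.measure_eq_zero_iff_ae_notMem]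
  filter_upwards [hSLLN] with ω hω
  intro hbad
  apply hbad
  -- goal : ω ∈ goodSet
  have hev : ∀ᶠ n : ℕ in atTop, (∑ i ∈ Finset.range n, X i ω) / n < 0 :=
    hω.eventually_lt_const (by linarith)
  obtain ⟨N, hN⟩ := Filter.eventually_atTop.1 hev
  rw [good_iff_Bdd ω 0]
  unfold Bdd
  set N' := max N 1 with hN'
  have hle : ∀ n : ℕ, N' ≤ n → g ω 0 (-(n:ℤ)) ≤ 0 := by
    intro n hn
    have h1 := hN n (le_trans (le_max_left _ _) hn)
    have hsum : (∑ i ∈ Finset.range n, X i ω) = ((g ω 0 (-(n:ℤ)) : ℤ) : ℝ) := by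
      rw [← sum_X_eq ω n]
      push_cast
      rfl
    rw [hsum] at h1
    have hnpos : (0:ℝ) < n := by
      have : 1 ≤ n := le_trans (le_max_right _ _) hn
      exact_mod_cast this
    by_contra hcon
    push_neg at hcon
    have : 0 < ((g ω 0 (-(n:ℤ)) : ℤ) : ℝ) := by exact_mod_cast hcon
    have := div_pos this hnpos
    linarith
  refine ⟨(Finset.range (N'+1)).sup' ⟨0, by simp⟩ (fun n => g ω 0 (-(n:ℤ))), ?_⟩
  rintro y ⟨k, hk, rfl⟩
  simp only [Set.mem_Iic] at hk
  set n0 : ℕ := (-k).toNat with hn0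
  have hkn : k = -(n0 : ℤ) := by omega
  by_cases hsmall : n0 ≤ N'
  · have hmem : n0 ∈ Finset.range (N'+1) := Finset.mem_range.2 (by omega)
    have h2 := Finset.le_sup' (f := fun n : ℕ => g ω 0 (-(n:ℤ))) hmem
    rw [hkn]
    exact h2
  · have h0 : g ω 0 k ≤ 0 := by rw [hkn]; exact hle _ (by omega)
    have hmem : 0 ∈ Finset.range (N'+1) := Finset.mem_range.2 (by omega)
    have h2 := Finset.le_sup' (f := fun n : ℕ => g ω 0 (-(n:ℤ))) hmem
    simp only [Nat.cast_zero, neg_zero] at h2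
    rw [g_self ω 0] at h2
    exact le_trans h0 h2


-- ## Decomposition over the value of qf (t-1) and ω t

open scoped Classical

lemma qf_toNat {ω : ℤ → ℤ} (h : ω ∈ goodSet) (m : ℤ) : ((qf ω m).toNat : ℤ) = qf ω m :=
  Int.toNat_of_nonneg (qf_nonneg h m)

lemma dec (hμ : IsBernoulliProduct μ p) (hp : 1/2 < p) (hp1 : p < 1)
    {t : ℤ} {A : Set (ℤ → ℤ)} (hA : MeasurableSet[pastσ (t-1)] A)
    (hAg : A ⊆ goodSet) (c : ℕ → ℤ → Prop) [∀ j' v, Decidable (c j' v)] :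
    μ {ω | ω ∈ A ∧ c (qf ω (t-1)).toNat (ω t)} =
      ∑' jv : ℕ × ℤ, if c jv.1 jv.2
        then μ (A ∩ {ω | qf ω (t-1) = (jv.1 : ℤ)}) * W p jv.2 else 0 := by
  set U : ℕ × ℤ → Set (ℤ → ℤ) := fun jv =>
    if c jv.1 jv.2 then A ∩ {ω | qf ω (t-1) = (jv.1 : ℤ)} ∩ {ω | ω t = jv.2} else ∅ with hU
  have hqfmeas : ∀ j : ℤ, MeasurableSet[pastσ (t-1)] {ω : ℤ → ℤ | qf ω (t-1) = j} := by
    intro j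
    have h : {ω : ℤ → ℤ | qf ω (t-1) = j} = (fun ω => qf ω (t-1)) ⁻¹' {j} := rfl
    rw [h]
    exact measurable_qf_past le_rfl (show MeasurableSet ({j} : Set ℤ) from trivial)
  have hUmeas : ∀ jv, MeasurableSet (U jv) := by
    intro jv
    by_cases hc : c jv.1 jv.2
    · simp only [hU, hc, if_true]
      exact (pastσ_le (t-1) _ (hA.inter (hqfmeas jv.1))).inter (measurableSet_coord t jv.2)
    · simp only [hU, hc, if_false]
      exact MeasurableSet.empty
  have hset : {ω | ω ∈ A ∧ c (qf ω (t-1)).toNat (ω t)} = ⋃ jv, U jv := by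
    ext ω
    simp only [Set.mem_setOf_eq, Set.mem_iUnion]
    constructor
    · rintro ⟨hωA, hωc⟩
      refine ⟨((qf ω (t-1)).toNat, ω t), ?_⟩
      simp only [hU, hωc, if_true]
      exact ⟨⟨hωA, (qf_toNat (hAg hωA) (t-1)).symm⟩, rfl⟩
    · rintro ⟨jv, hjv⟩
      by_cases hc : c jv.1 jv.2
      · simp only [hU, hc, if_true] at hjv
        obtain ⟨⟨hωA, hq⟩, hv⟩ := hjv
        refine ⟨hωA, ?_⟩
        have hq' : qf ω (t-1) = (jv.1 : ℤ) := hq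
        have hv' : ω t = jv.2 := hv
        have h1 : (qf ω (t-1)).toNat = jv.1 := by omega
        rw [h1, hv']
        exact hc
      · simp only [hU, hc, if_false] at hjv
        exact absurd hjv (Set.notMem_empty ω)
  have hdisj : Pairwise (Function.onFun Disjoint U) := by
    intro jv jv' hne
    unfold Function.onFun
    by_cases hc : c jv.1 jv.2
    · by_cases hc' : c jv'.1 jv'.2
      · simp only [hU, hc, hc', if_true]
        rw [Set.disjoint_left]
        rintro ω ⟨⟨_, hq⟩, hv⟩ ⟨⟨_, hq'⟩, hv'⟩
        apply hne
        have hq2 : qf ω (t-1) = (jv.1 : ℤ) := hq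
        have hq2' : qf ω (t-1) = (jv'.1 : ℤ) := hq'
        have hv2 : ω t = jv.2 := hv
        have hv2' : ω t = jv'.2 := hv'
        have h1 : jv.1 = jv'.1 := by omega
        have h2 : jv.2 = jv'.2 := by rw [← hv2, ← hv2']
        exact Prod.ext h1 h2
      · simp only [hU, hc', if_false]
        exact Set.disjoint_empty _
    · simp only [hU, hc, if_false]
      exact Set.empty_disjoint _
  rw [hset, measure_iUnion hdisj hUmeas]
  apply tsum_congr
  intro jv
  by_cases hc : c jv.1 jv.2
  · simp only [hU, hc, if_true]
    exact indep_apply hμ hp hp1 (hA.inter (hqfmeas jv.1)) jv.2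
  · simp only [hU, hc, if_false]
    exact measure_empty

-- ## The geometric distribution of qf

def geo (p : ℝ) (j : ℕ) : ℝ≥0∞ := ENNReal.ofReal ((1 - (1-p)/p) * ((1-p)/p)^j)

section Geo

variable (hp : 1/2 < p) (hp1 : p < 1)

include hp hp1

lemma p_pos : 0 < p := by linarith
lemma r_nonneg : 0 ≤ (1-p)/p := div_nonneg (by linarith) (by linarith)
lemma r_lt_one : (1-p)/p < 1 := by
  rw [div_lt_one (by linarith)]; linarith

lemma gid (j : ℕ) : ENNReal.ofReal p * geo p (j+1) = ENNReal.ofReal (1-p) * geo p j := by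
  unfold geo
  rw [← ENNReal.ofReal_mul (by linarith), ← ENNReal.ofReal_mul (by linarith)]
  congr 1
  have hpr : p * ((1-p)/p) = 1-p := by field_simp
  rw [pow_succ]
  linear_combination ((1 - (1-p)/p) * ((1-p)/p)^j) * hpr

end Geo

lemma W_one : W p 1 = ENNReal.ofReal p := rfl
lemma W_neg_one : W p (-1) = ENNReal.ofReal (1-p) := rfl

lemma good_meas : MeasurableSet goodSet := pastσ_le 0 _ (measurableSet_good_past 0)

lemma good_one (hμ : IsBernoulliProduct μ p) (hp : 1/2 < p) (hp1 : p < 1) : μ goodSet = 1 := by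
  haveI : IsProbabilityMeasure μ := hμ.1
  exact (prob_compl_eq_zero_iff good_meas).1 (bad_null hμ hp hp1)

lemma GQ_disjoint (m : ℤ) : Pairwise (Function.onFun Disjoint (fun j : ℕ => GQ m (j:ℤ))) := by
  intro j j' hne
  unfold Function.onFun GQ
  rw [Set.disjoint_left]
  rintro ω ⟨_, hq⟩ ⟨_, hq'⟩
  simp only [Set.mem_setOf_eq] at hq hq'
  apply hne
  omega

lemma good_partition (m : ℤ) : goodSet = ⋃ j : ℕ, GQ m (j:ℤ) := by
  ext ω
  simp only [Set.mem_iUnion, GQ, Set.mem_inter_iff, Set.mem_setOf_eq]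
  constructor
  · intro h
    exact ⟨(qf ω m).toNat, h, (qf_toNat h m).symm⟩
  · rintro ⟨j, h, _⟩
    exact h

lemma tsum_GQ (hμ : IsBernoulliProduct μ p) (hp : 1/2 < p) (hp1 : p < 1) (m : ℤ) :
    (∑' j : ℕ, μ (GQ m (j:ℤ))) = 1 := by
  rw [← measure_iUnion (GQ_disjoint m) (fun j => measurableSet_GQ m (j:ℤ)),
    ← good_partition m, good_one hμ hp hp1]

lemma GQ_geo (hμ : IsBernoulliProduct μ p) (hp : 1/2 < p) (hp1 : p < 1) (m : ℤ) (j : ℕ) :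
    μ (GQ m (j:ℤ)) = geo p j := by
  haveI : IsProbabilityMeasure μ := hμ.1
  set r : ℝ := (1-p)/p with hr
  have hp0 : (0:ℝ) < p := p_pos hp hp1
  have hr0 : 0 ≤ r := r_nonneg hp hp1
  have hr1 : r < 1 := r_lt_one hp hp1
  set F : ℕ → ℝ≥0∞ := fun j => μ (GQ 0 (j:ℤ)) with hF
  have hFfin : ∀ j, F j ≠ ⊤ := fun j => (measure_lt_top μ _).ne
  -- the recursion
  have hrec : ∀ j : ℕ, F j = ∑' jv : ℕ × ℤ,
      if max ((jv.1:ℤ) - jv.2) 0 = (j:ℤ) then F jv.1 * W p jv.2 else 0 := by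
    intro j
    have h10 : (1:ℤ) - 1 = 0 := by norm_num
    have hdec := dec hμ hp hp1 (t := 1) (A := goodSet)
      (by rw [h10]; exact measurableSet_good_past 0) (le_refl _)
      (fun j' v => max ((j':ℤ) - v) 0 = (j:ℤ))
    rw [h10] at hdec
    have hsetA : {ω | ω ∈ goodSet ∧ max (((qf ω 0).toNat:ℤ) - ω 1) 0 = (j:ℤ)} = GQ 1 (j:ℤ) := by
      ext ω
      simp only [Set.mem_setOf_eq, GQ, Set.mem_inter_iff]
      constructor
      · rintro ⟨hg, hc⟩
        refine ⟨hg, ?_⟩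
        rw [qf_toNat hg 0] at hc
        rw [qf_pred hg 1]
        simpa using hc
      · rintro ⟨hg, hc⟩
        refine ⟨hg, ?_⟩
        rw [qf_toNat hg 0]
        rw [qf_pred hg 1] at hc
        simpa using hc
    rw [hsetA] at hdec
    have hstat := GQ_stationary hμ hp hp1 1 (j:ℤ)
    rw [hstat] at hdec
    exact hdec
  -- evaluate the recursion: j = 0 case
  have e0 : F 0 = F 0 * ENNReal.ofReal p + F 1 * ENNReal.ofReal p := by
    have h := hrec 0
    rw [tsum_eq_sum (s := {((0:ℕ),(1:ℤ)), ((1:ℕ),(1:ℤ))}) ?hoff] at h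
    case hoff =>
      rintro ⟨j', v⟩ hno
      simp only [Finset.mem_insert, Finset.mem_singleton, Prod.mk.injEq] at hno
      push_neg at hno
      by_cases hcond : max ((j':ℤ) - v) 0 = ((0:ℕ):ℤ)
      · rw [if_pos hcond]
        have hv1 : v ≠ 1 := by
          intro hv; subst hv
          rcases hno with ⟨h1, h2⟩
          have : j' ≠ 0 := fun hh => (h1 hh) rfl
          have : j' ≠ 1 := fun hh => (h2 hh) rfl
          omega
        have hv2 : v ≠ -1 := by intro hv; subst hv; omega
        have : W p v = 0 := by unfold W; rw [if_neg hv1, if_neg hv2]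
        rw [this, mul_zero]
      · rw [if_neg hcond]
    rw [Finset.sum_insert (by decide), Finset.sum_singleton] at h
    dsimp only at h
    push_cast at h
    rw [if_pos (by omega : max (-1:ℤ) 0 = (0:ℤ)),
      if_pos (by omega : max (0:ℤ) 0 = (0:ℤ)), W_one] at h
    exact h
  -- j = k+1 case
  have eS : ∀ k : ℕ, F (k+1) = F (k+2) * ENNReal.ofReal p + F k * ENNReal.ofReal (1-p) := by
    intro k
    have h := hrec (k+1)
    rw [tsum_eq_sum (s := {((k+2:ℕ),(1:ℤ)), ((k:ℕ),(-1:ℤ))}) ?hoff] at h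
    case hoff =>
      rintro ⟨j', v⟩ hno
      simp only [Finset.mem_insert, Finset.mem_singleton, Prod.mk.injEq] at hno
      push_neg at hno
      by_cases hcond : max ((j':ℤ) - v) 0 = ((k+1:ℕ):ℤ)
      · rw [if_pos hcond]
        have hv1 : v ≠ 1 := by
          intro hv; subst hv
          rcases hno with ⟨h1, h2⟩
          have : j' ≠ k+2 := fun hh => (h1 hh) rfl
          push_cast at hcond
          omega
        have hv2 : v ≠ -1 := by
          intro hv; subst hv
          rcases hno with ⟨h1, h2⟩
          have : j' ≠ k := fun hh => (h2 hh) rfl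
          push_cast at hcond
          omega
        have : W p v = 0 := by unfold W; rw [if_neg hv1, if_neg hv2]
        rw [this, mul_zero]
      · rw [if_neg hcond]
    rw [Finset.sum_insert (by
      simp only [Finset.mem_singleton, Prod.mk.injEq]
      rintro ⟨h1, h2⟩
      omega), Finset.sum_singleton] at h
    dsimp only at h
    push_cast at h
    rw [if_pos (by omega : max ((k:ℤ) + 2 - 1) 0 = (k:ℤ) + 1),
      if_pos (by omega : max ((k:ℤ) - -1) 0 = (k:ℤ) + 1),
      W_one, W_neg_one] at h
    exact h
  -- pass to the reals
  set a : ℕ → ℝ := fun j => (F j).toReal with ha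
  have haF : ∀ j, F j = ENNReal.ofReal (a j) := fun j => (ENNReal.ofReal_toReal (hFfin j)).symm
  have ha0 : ∀ j, 0 ≤ a j := fun j => ENNReal.toReal_nonneg
  have e0R : a 0 = a 0 * p + a 1 * p := by
    have := congrArg ENNReal.toReal e0
    rwa [ENNReal.toReal_add (ENNReal.mul_ne_top (hFfin _) ENNReal.ofReal_ne_top) (ENNReal.mul_ne_top (hFfin _) ENNReal.ofReal_ne_top), ENNReal.toReal_mul,
      ENNReal.toReal_mul, ENNReal.toReal_ofReal hp0.le] at this
  have eSR : ∀ k : ℕ, a (k+1) = a (k+2) * p + a k * (1-p) := by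
    intro k
    have := congrArg ENNReal.toReal (eS k)
    rwa [ENNReal.toReal_add (ENNReal.mul_ne_top (hFfin _) ENNReal.ofReal_ne_top) (ENNReal.mul_ne_top (hFfin _) ENNReal.ofReal_ne_top), ENNReal.toReal_mul,
      ENNReal.toReal_mul, ENNReal.toReal_ofReal hp0.le,
      ENNReal.toReal_ofReal (by linarith)] at this
  -- solve the recursion
  have hsol : ∀ j : ℕ, a j = a 0 * r ^ j := by
    have hstep : ∀ j : ℕ, a j = a 0 * r ^ j ∧ a (j+1) = a 0 * r ^ (j+1) := by
      intro j
      induction j with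
      | zero =>
        refine ⟨by simp, ?_⟩
        have h1 : a 1 * p = a 0 * (1 - p) := by linarith [e0R]
        rw [pow_one, hr, ← mul_div_assoc, eq_div_iff (ne_of_gt hp0)]
        linarith
      | succ k ih =>
        refine ⟨ih.2, ?_⟩
        have hkey : p * r^(k+2) + (1-p) * r^k = r^(k+1) := by
          have hr2 : p * r^2 + (1-p) - r = 0 := by
            rw [hr]; field_simp; ring
          have e1 : r^(k+2) = r^k * r^2 := by ring
          have e2 : r^(k+1) = r^k * r := by ring
          rw [e1, e2]
          linear_combination r^k * hr2
        have h1 := eSR k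
        rw [ih.1, ih.2] at h1
        -- h1 : a 0 * r^(k+1) = a (k+2) * p + a 0 * r^k * (1-p)
        have h2 : a (k+2) * p = a 0 * r^(k+2) * p := by
          linear_combination (-(a 0)) * hkey - h1
        have := mul_right_cancel₀ (ne_of_gt hp0) h2
        exact this
    exact fun j => (hstep j).1
  -- total mass
  have hsum : (∑' j : ℕ, F j) = 1 := tsum_GQ hμ hp hp1 0
  have hsum2 : ENNReal.ofReal (a 0 * (1-r)⁻¹) = 1 := by
    have hsummable : Summable (fun j : ℕ => a 0 * r ^ j) :=
      (summable_geometric_of_lt_one hr0 hr1).mul_left _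
    have : (∑' j : ℕ, F j) = ENNReal.ofReal (∑' j : ℕ, a 0 * r ^ j) := by
      rw [ENNReal.ofReal_tsum_of_nonneg (fun j => by positivity) hsummable]
      apply tsum_congr
      intro j
      rw [haF j, hsol j]
    rw [this, tsum_mul_left, tsum_geometric_of_lt_one hr0 hr1] at hsum
    exact hsum
  have ha0v : a 0 = 1 - r := by
    have h1r : (0:ℝ) < 1 - r := by linarith
    have := (ENNReal.ofReal_eq_one).1 hsum2
    have h2 : a 0 = (1-r) := by
      field_simp at this
      linarith
    exact h2
  -- conclude
  have hFj : F j = geo p j := by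
    rw [haF j, hsol j, ha0v]
    rfl
  calc μ (GQ m (j:ℤ)) = μ (GQ 0 (j:ℤ)) := GQ_stationary hμ hp hp1 m (j:ℤ)
  _ = geo p j := hFj


-- ## One-step lemma

def WS (p : ℝ) (E : Set ℤ) : ℝ≥0∞ :=
  (if (1:ℤ) ∈ E then ENNReal.ofReal p else 0) +
  (if (-1:ℤ) ∈ E then ENNReal.ofReal (1-p) else 0)

lemma WS_univ (hp : 1/2 < p) (hp1 : p < 1) : WS p Set.univ = 1 := by
  unfold WS
  simp only [Set.mem_univ, if_true]
  exact W_add_one hp hp1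

lemma WS_singleton (v : ℤ) : WS p {v} = W p v := by
  unfold WS W
  by_cases h1 : v = 1
  · subst h1; norm_num
  · by_cases h2 : v = -1
    · subst h2; norm_num
    · rw [if_neg (by rw [Set.mem_singleton_iff]; exact Ne.symm h1),
        if_neg (by rw [Set.mem_singleton_iff]; exact Ne.symm h2),
        if_neg h1, if_neg h2, add_zero]

lemma geo_tsum (hp : 1/2 < p) (hp1 : p < 1) : (∑' j : ℕ, geo p j) = 1 := by
  set r : ℝ := (1-p)/p with hr
  have hr0 : 0 ≤ r := r_nonneg hp hp1
  have hr1 : r < 1 := r_lt_one hp hp1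
  unfold geo
  rw [← ENNReal.ofReal_tsum_of_nonneg
    (fun j => mul_nonneg (by linarith) (pow_nonneg hr0 j))
    ((summable_geometric_of_lt_one hr0 hr1).mul_left _)]
  rw [tsum_mul_left, tsum_geometric_of_lt_one hr0 hr1]
  rw [mul_inv_cancel₀ (by linarith)]
  norm_num

lemma step (hμ : IsBernoulliProduct μ p) (hp : 1/2 < p) (hp1 : p < 1)
    {t : ℤ} {A : Set (ℤ → ℤ)} (hA : MeasurableSet[pastσ (t-1)] A)
    (hAg : A ⊆ goodSet) {c0 : ℝ≥0∞}
    (hA3 : ∀ j' : ℕ, μ (A ∩ {ω | qf ω (t-1) = (j':ℤ)}) = c0 * geo p j')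
    (E : Set ℤ) (j : ℕ) :
    μ (A ∩ {ω | Tg ω t ∈ E} ∩ {ω | qf ω t = (j:ℤ)}) = (c0 * WS p E) * geo p j := by
  set c : ℕ → ℤ → Prop := fun j' v =>
    (2 * (max ((j':ℤ) - v) 0 - (j':ℤ)) + v ∈ E) ∧ (max ((j':ℤ) - v) 0 = (j:ℤ)) with hc
  have hset : A ∩ {ω | Tg ω t ∈ E} ∩ {ω | qf ω t = (j:ℤ)} =
      {ω | ω ∈ A ∧ c (qf ω (t-1)).toNat (ω t)} := by
    ext ω
    simp only [Set.mem_inter_iff, Set.mem_setOf_eq, hc]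
    constructor
    · rintro ⟨⟨hωA, hT⟩, hq⟩
      have hg := hAg hωA
      refine ⟨hωA, ?_, ?_⟩
      · rw [qf_toNat hg (t-1)]
        unfold Tg at hT
        exact hT
      · rw [qf_toNat hg (t-1), ← qf_pred hg t]
        exact hq
    · rintro ⟨hωA, hT, hq⟩
      have hg := hAg hωA
      rw [qf_toNat hg (t-1)] at hT hq
      refine ⟨⟨hωA, ?_⟩, ?_⟩
      · unfold Tg; exact hT
      · rw [qf_pred hg t]; exact hq
  rw [hset, dec hμ hp hp1 hA hAg c]
  have hterm : ∀ jv : ℕ × ℤ,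
      (if c jv.1 jv.2 then μ (A ∩ {ω | qf ω (t-1) = (jv.1:ℤ)}) * W p jv.2 else 0) =
      (if c jv.1 jv.2 then (c0 * geo p jv.1) * W p jv.2 else 0) := by
    intro jv
    by_cases hcc : c jv.1 jv.2
    · rw [if_pos hcc, if_pos hcc, hA3]
    · rw [if_neg hcc, if_neg hcc]
  rw [tsum_congr hterm]
  -- compute the sum
  rw [tsum_eq_sum (s := {((0:ℕ),(1:ℤ)), (j+1,(1:ℤ)), (j-1,(-1:ℤ))}) ?hoff]
  case hoff =>
    rintro ⟨j', v⟩ hno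
    simp only [Finset.mem_insert, Finset.mem_singleton, Prod.mk.injEq] at hno
    push_neg at hno
    by_cases hcc : c (j', v).1 (j', v).2
    · rw [if_pos hcc]
      rw [hc] at hcc
      obtain ⟨hval, hmax⟩ := hcc
      dsimp only at hval hmax hno
      have hv1 : v ≠ 1 := by
        intro hv; subst hv
        rcases hno with ⟨h1, h2, _⟩
        have e1 : j' ≠ 0 := fun hh => (h1 hh) rfl
        have e2 : j' ≠ j+1 := fun hh => (h2 hh) rfl
        omega
      have hv2 : v ≠ -1 := by
        intro hv; subst hv
        rcases hno with ⟨_, _, h3⟩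
        have e3 : j' ≠ j-1 := fun hh => (h3 hh) rfl
        omega
      have : W p v = 0 := by unfold W; rw [if_neg hv1, if_neg hv2]
      rw [this, mul_zero]
    · rw [if_neg hcc]
  -- now a finite sum with three explicit terms
  have hne1 : ((0:ℕ),(1:ℤ)) ≠ (j+1,(1:ℤ)) := by simp
  rcases Nat.eq_zero_or_pos j with hj | hj
  · subst hj
    rw [Finset.sum_insert (by decide), Finset.sum_insert (by decide),
      Finset.sum_singleton]
    dsimp only
    have hc1 : c 0 1 ↔ (1:ℤ) ∈ E := by
      rw [hc]
      constructor
      · rintro ⟨h, _⟩; simpa using h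
      · intro h; refine ⟨by simpa using h, by omega⟩
    have hc2 : c 1 1 ↔ (-1:ℤ) ∈ E := by
      rw [hc]
      constructor
      · rintro ⟨h, _⟩; simpa using h
      · intro h; refine ⟨by simpa using h, by omega⟩
    have hc3 : ¬ c (0-1) (-1) := by
      rw [hc]
      rintro ⟨_, h⟩
      simp only [Nat.zero_sub, Nat.cast_zero] at h
      omega
    rw [if_neg hc3, add_zero]
    by_cases h1E : (1:ℤ) ∈ E <;> by_cases h2E : (-1:ℤ) ∈ E
    · rw [if_pos (hc1.2 h1E), if_pos (hc2.2 h2E)]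
      unfold WS
      rw [if_pos h1E, if_pos h2E, W_one]
      have hg := gid hp hp1 0
      calc c0 * geo p 0 * ENNReal.ofReal p + c0 * geo p (0+1) * ENNReal.ofReal p
          = c0 * (ENNReal.ofReal p * geo p 0) + c0 * (ENNReal.ofReal p * geo p (0+1)) := by ring
        _ = c0 * (ENNReal.ofReal p * geo p 0) + c0 * (ENNReal.ofReal (1-p) * geo p 0) := by rw [hg]
        _ = (c0 * (ENNReal.ofReal p + ENNReal.ofReal (1-p))) * geo p 0 := by ring
    · rw [if_pos (hc1.2 h1E), if_neg (fun hh => h2E (hc2.1 hh))]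
      unfold WS
      rw [if_pos h1E, if_neg h2E, W_one]
      ring
    · rw [if_neg (fun hh => h1E (hc1.1 hh)), if_pos (hc2.2 h2E)]
      unfold WS
      rw [if_neg h1E, if_pos h2E, W_one]
      have hg := gid hp hp1 0
      calc 0 + c0 * geo p (0+1) * ENNReal.ofReal p
          = c0 * (ENNReal.ofReal p * geo p (0+1)) := by ring
        _ = c0 * (ENNReal.ofReal (1-p) * geo p 0) := by rw [hg]
        _ = c0 * (0 + ENNReal.ofReal (1-p)) * geo p 0 := by ring
    · rw [if_neg (fun hh => h1E (hc1.1 hh)), if_neg (fun hh => h2E (hc2.1 hh))]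
      unfold WS
      rw [if_neg h1E, if_neg h2E]
      ring
  · -- j ≥ 1
    obtain ⟨k, rfl⟩ : ∃ k : ℕ, j = k + 1 := ⟨j - 1, by omega⟩
    rw [Finset.sum_insert (by
        simp only [Finset.mem_insert, Finset.mem_singleton, Prod.mk.injEq]
        push_neg
        refine ⟨fun h => absurd h (by omega), fun _ => by decide⟩),
      Finset.sum_insert (by
        simp only [Finset.mem_singleton, Prod.mk.injEq]
        push_neg
        exact fun _ => by decide),
      Finset.sum_singleton]
    dsimp only
    have hc1 : ¬ c 0 1 := by
      rw [hc]
      rintro ⟨_, h⟩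
      simp only [Nat.cast_zero] at h
      omega
    have hc2 : c (k+1+1) 1 ↔ (-1:ℤ) ∈ E := by
      rw [hc]
      constructor
      · rintro ⟨h, _⟩
        have e : 2 * (max ((((k+1+1):ℕ):ℤ) - 1) 0 - (((k+1+1):ℕ):ℤ)) + 1 = -1 := by
          push_cast; omega
        rwa [e] at h
      · intro h
        constructor
        · have e : 2 * (max ((((k+1+1):ℕ):ℤ) - 1) 0 - (((k+1+1):ℕ):ℤ)) + 1 = -1 := by
            push_cast; omega
          rwa [e]
        · push_cast; omega
    have hc3 : c k (-1) ↔ (1:ℤ) ∈ E := by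
      rw [hc]
      constructor
      · rintro ⟨h, _⟩
        have e : 2 * (max (((k:ℕ):ℤ) - (-1)) 0 - ((k:ℕ):ℤ)) + (-1) = 1 := by
          push_cast; omega
        rwa [e] at h
      · intro h
        constructor
        · have e : 2 * (max (((k:ℕ):ℤ) - (-1)) 0 - ((k:ℕ):ℤ)) + (-1) = 1 := by
            push_cast; omega
          rwa [e]
        · push_cast; omega
    rw [if_neg hc1]
    simp only [Nat.add_sub_cancel]
    by_cases h1E : (1:ℤ) ∈ E <;> by_cases h2E : (-1:ℤ) ∈ E
    · rw [if_pos (hc2.2 h2E), if_pos (hc3.2 h1E)]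
      unfold WS
      rw [if_pos h1E, if_pos h2E, W_one, W_neg_one]
      have hg1 := gid hp hp1 (k+1)
      have hg2 := gid hp hp1 k
      calc 0 + (c0 * geo p (k+1+1) * ENNReal.ofReal p + c0 * geo p k * ENNReal.ofReal (1-p))
          = c0 * (ENNReal.ofReal p * geo p (k+1+1)) + c0 * (ENNReal.ofReal (1-p) * geo p k) := by ring
        _ = c0 * (ENNReal.ofReal (1-p) * geo p (k+1)) + c0 * (ENNReal.ofReal p * geo p (k+1)) := by
            rw [hg1, hg2]
        _ = c0 * (ENNReal.ofReal p + ENNReal.ofReal (1-p)) * geo p (k+1) := by ring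
    · rw [if_neg (fun hh => h2E (hc2.1 hh)), if_pos (hc3.2 h1E)]
      unfold WS
      rw [if_pos h1E, if_neg h2E, W_neg_one]
      have hg2 := gid hp hp1 k
      calc 0 + (0 + c0 * geo p k * ENNReal.ofReal (1-p))
          = c0 * (ENNReal.ofReal (1-p) * geo p k) := by ring
        _ = c0 * (ENNReal.ofReal p * geo p (k+1)) := by rw [hg2]
        _ = c0 * (ENNReal.ofReal p + 0) * geo p (k+1) := by ring
    · rw [if_pos (hc2.2 h2E), if_neg (fun hh => h1E (hc3.1 hh))]
      unfold WS
      rw [if_neg h1E, if_pos h2E, W_one]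
      have hg1 := gid hp hp1 (k+1)
      calc 0 + (c0 * geo p (k+1+1) * ENNReal.ofReal p + 0)
          = c0 * (ENNReal.ofReal p * geo p (k+1+1)) := by ring
        _ = c0 * (ENNReal.ofReal (1-p) * geo p (k+1)) := by rw [hg1]
        _ = c0 * (0 + ENNReal.ofReal (1-p)) * geo p (k+1) := by ring
    · rw [if_neg (fun hh => h2E (hc2.1 hh)), if_neg (fun hh => h1E (hc3.1 hh))]
      unfold WS
      rw [if_neg h1E, if_neg h2E]
      ring


-- ## Induction over intervals

lemma measurableSet_qf_eq (m j : ℤ) : MeasurableSet[pastσ m] {ω : ℤ → ℤ | qf ω m = j} := by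
  have h : {ω : ℤ → ℤ | qf ω m = j} = (fun ω => qf ω m) ⁻¹' {j} := rfl
  rw [h]
  exact measurable_qf_past le_rfl (show MeasurableSet ({j} : Set ℤ) from trivial)

lemma measA_past (a b : ℤ) (f : ℤ → Set ℤ) :
    MeasurableSet[pastσ b] (goodSet ∩ {ω | ∀ n ∈ Finset.Icc a b, Tg ω n ∈ f n}) := by
  apply (measurableSet_good_past b).inter
  have hrw : {ω : ℤ → ℤ | ∀ n ∈ Finset.Icc a b, Tg ω n ∈ f n} =
      ⋂ n ∈ Finset.Icc a b, (fun ω => Tg ω n) ⁻¹' (f n) := by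
    ext ω; simp
  rw [hrw]
  refine Finset.measurableSet_biInter _ (fun n hn => ?_)
  exact measurable_Tg_past (Finset.mem_Icc.1 hn).2 (show MeasurableSet (f n) from trivial)

lemma ind (hμ : IsBernoulliProduct μ p) (hp : 1/2 < p) (hp1 : p < 1)
    (a : ℤ) (f : ℤ → Set ℤ) : ∀ (k : ℕ) (j : ℕ),
    μ (goodSet ∩ {ω | ∀ n ∈ Finset.Icc a (a - 1 + (k:ℤ)), Tg ω n ∈ f n}
        ∩ {ω | qf ω (a - 1 + (k:ℤ)) = (j:ℤ)})
      = (∏ n ∈ Finset.Icc a (a - 1 + (k:ℤ)), WS p (f n)) * geo p j := by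
  intro k
  induction k with
  | zero =>
    intro j
    have h0 : a - 1 + ((0:ℕ):ℤ) = a - 1 := by norm_num
    rw [h0]
    have hemp : Finset.Icc a (a-1) = ∅ := Finset.Icc_eq_empty (by omega)
    rw [hemp]
    have huniv : {ω : ℤ → ℤ | ∀ n ∈ (∅ : Finset ℤ), Tg ω n ∈ f n} = Set.univ := by
      ext ω; simp
    rw [huniv, Set.inter_univ, Finset.prod_empty, one_mul]
    exact GQ_geo hμ hp hp1 (a-1) j
  | succ k ih =>
    intro j
    have hkb : a - 1 + ((k+1 : ℕ) : ℤ) = (a - 1 + (k:ℤ)) + 1 := by push_cast; ring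
    rw [hkb]
    set b := a - 1 + (k:ℤ) with hb
    set A := goodSet ∩ {ω | ∀ n ∈ Finset.Icc a b, Tg ω n ∈ f n} with hA
    have heb : b + 1 - 1 = b := by ring
    have hAmeas : MeasurableSet[pastσ (b+1-1)] A := by
      rw [heb]; exact measA_past a b f
    have hAg : A ⊆ goodSet := Set.inter_subset_left
    have hA3 : ∀ j' : ℕ, μ (A ∩ {ω | qf ω (b+1-1) = (j':ℤ)}) =
        (∏ n ∈ Finset.Icc a b, WS p (f n)) * geo p j' := by
      intro j'
      rw [heb]
      exact ih j'
    have hstep := step hμ hp hp1 hAmeas hAg hA3 (f (b+1)) j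
    have hIcc : Finset.Icc a (b+1) = insert (b+1) (Finset.Icc a b) := by
      ext i
      simp only [Finset.mem_Icc, Finset.mem_insert]
      omega
    have hsetev : A ∩ {ω | Tg ω (b+1) ∈ f (b+1)} =
        goodSet ∩ {ω | ∀ n ∈ Finset.Icc a (b+1), Tg ω n ∈ f n} := by
      rw [hA, hIcc]
      ext ω
      simp only [Set.mem_inter_iff, Set.mem_setOf_eq, Finset.mem_insert]
      constructor
      · rintro ⟨⟨hg, hall⟩, hnew⟩
        refine ⟨hg, fun n hn => ?_⟩
        rcases hn with rfl | hn
        · exact hnew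
        · exact hall n hn
      · rintro ⟨hg, hall⟩
        exact ⟨⟨hg, fun n hn => hall n (Or.inr hn)⟩, hall (b+1) (Or.inl rfl)⟩
    rw [hsetev] at hstep
    rw [hstep, hIcc, Finset.prod_insert (by
      simp only [Finset.mem_Icc]
      omega)]
    ring

-- ## The cylinder computation for T

lemma meas_inter_good (hμ : IsBernoulliProduct μ p) (hp : 1/2 < p) (hp1 : p < 1)
    (X : Set (ℤ → ℤ)) : μ (goodSet ∩ X) = μ X := by
  apply le_antisymm (measure_mono Set.inter_subset_right)
  calc μ X ≤ μ ((goodSet ∩ X) ∪ goodSetᶜ) := by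
        apply measure_mono
        intro ω hω
        by_cases hg : ω ∈ goodSet
        · exact Or.inl ⟨hg, hω⟩
        · exact Or.inr hg
    _ ≤ μ (goodSet ∩ X) + μ goodSetᶜ := measure_union_le _ _
    _ = μ (goodSet ∩ X) := by rw [bad_null hμ hp hp1, add_zero]

lemma T_cyl (hμ : IsBernoulliProduct μ p) (hp : 1/2 < p) (hp1 : p < 1)
    (F : Finset ℤ) (h : ℤ → ℤ) :
    μ (burkeT ⁻¹' cylSet F h) = ∏ i ∈ F, W p (h i) := by
  haveI : IsProbabilityMeasure μ := hμ.1
  rcases F.eq_empty_or_nonempty with rfl | hne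
  · have huniv : burkeT ⁻¹' cylSet ∅ h = Set.univ := by
      ext ω; simp [cylSet]
    rw [huniv, Finset.prod_empty]
    simp
  · set a := F.min' hne with ha
    set b := F.max' hne with hbv
    have hab : a ≤ b := F.min'_le (F.max' hne) (F.max'_mem hne)
    set fE : ℤ → Set ℤ := fun n => if n ∈ F then ({h n} : Set ℤ) else Set.univ with hfE
    have hgood : goodSet ∩ (burkeT ⁻¹' cylSet F h) =
        goodSet ∩ {ω | ∀ n ∈ Finset.Icc a b, Tg ω n ∈ fE n} := by
      ext ω
      simp only [Set.mem_inter_iff, Set.mem_preimage, cylSet, Set.mem_setOf_eq]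
      constructor
      · rintro ⟨hg, hcyl⟩
        refine ⟨hg, fun n hn => ?_⟩
        rw [hfE]
        dsimp only
        by_cases hnF : n ∈ F
        · rw [if_pos hnF]
          rw [← burkeT_eq_Tg hg n]
          exact hcyl n hnF
        · rw [if_neg hnF]; trivial
      · rintro ⟨hg, hall⟩
        refine ⟨hg, fun i hi => ?_⟩
        have hmem : i ∈ Finset.Icc a b := Finset.mem_Icc.2 ⟨F.min'_le i hi, F.le_max' i hi⟩
        have := hall i hmem
        rw [hfE] at this
        dsimp only at this
        rw [if_pos hi] at this
        rw [burkeT_eq_Tg hg i]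
        exact this
    rw [← meas_inter_good hμ hp hp1, hgood]
    -- partition over the value of qf at b
    set Y := {ω : ℤ → ℤ | ∀ n ∈ Finset.Icc a b, Tg ω n ∈ fE n} with hY
    have hpart : goodSet ∩ Y = ⋃ j : ℕ, (goodSet ∩ Y ∩ {ω | qf ω b = (j:ℤ)}) := by
      ext ω
      simp only [Set.mem_iUnion, Set.mem_inter_iff, Set.mem_setOf_eq]
      constructor
      · rintro ⟨hg, hy⟩
        exact ⟨(qf ω b).toNat, ⟨hg, hy⟩, (qf_toNat hg b).symm⟩
      · rintro ⟨j, ⟨hg, hy⟩, _⟩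
        exact ⟨hg, hy⟩
    have hmeasj : ∀ j : ℕ, MeasurableSet (goodSet ∩ Y ∩ {ω | qf ω b = (j:ℤ)}) := by
      intro j
      exact pastσ_le b _ (((measA_past a b fE).inter (measurableSet_qf_eq b (j:ℤ))))
    have hdisjj : Pairwise (Function.onFun Disjoint
        (fun j : ℕ => goodSet ∩ Y ∩ {ω | qf ω b = (j:ℤ)})) := by
      intro j j' hne'
      unfold Function.onFun
      rw [Set.disjoint_left]
      rintro ω ⟨_, hq⟩ ⟨_, hq'⟩
      simp only [Set.mem_setOf_eq] at hq hq'
      apply hne'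
      omega
    rw [hpart, measure_iUnion hdisjj hmeasj]
    obtain ⟨k, hk⟩ : ∃ k : ℕ, b = a - 1 + (k:ℤ) := ⟨(b - a + 1).toNat, by omega⟩
    have hterm : ∀ j : ℕ, μ (goodSet ∩ Y ∩ {ω | qf ω b = (j:ℤ)}) =
        (∏ n ∈ Finset.Icc a b, WS p (fE n)) * geo p j := by
      intro j
      rw [hY, hk]
      exact ind hμ hp hp1 a fE k j
    rw [tsum_congr hterm, ENNReal.tsum_mul_left, geo_tsum hp hp1, mul_one]
    -- evaluate the product
    have hFsub : F ⊆ Finset.Icc a b := fun i hi =>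
      Finset.mem_Icc.2 ⟨F.min'_le i hi, F.le_max' i hi⟩
    rw [← Finset.prod_subset hFsub (fun x _ hx => by
      rw [hfE]
      dsimp only
      rw [if_neg hx]
      exact WS_univ hp hp1)]
    apply Finset.prod_congr rfl
    intro i hi
    rw [hfE]
    dsimp only
    rw [if_pos hi]
    exact WS_singleton (h i)

lemma map_T (hμ : IsBernoulliProduct μ p) (hp : 1/2 < p) (hp1 : p < 1) :
    μ.map burkeT = μ := by
  haveI : IsProbabilityMeasure μ := hμ.1
  haveI : IsProbabilityMeasure (μ.map burkeT) :=
    Measure.isProbabilityMeasure_map measurable_burkeT.aemeasurable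
  apply ext_cyl
  intro F f
  rw [Measure.map_apply measurable_burkeT (measurableSet_cylSet F f),
    T_cyl hμ hp hp1 F f, cyl_meas hμ hp hp1 F f]

end Meas

end BurkeProof

/-- The transformation `T`, `(Tω)ₙ = yₙ - yₙ₋₁` with `y = 2s - x`,
is measure preserving for the Bernoulli product measure: `μ ∘ T⁻¹ = μ`. -/
theorem stmt2 (p : ℝ) (hp : 1 / 2 < p) (hp1 : p < 1)
    (μ : Measure (ℤ → ℤ)) (hμ : IsBernoulliProduct μ p) :
    ∀ A : Set (ℤ → ℤ), MeasurableSet A → μ (burkeT ⁻¹' A) = μ A := by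
  intro A hA
  rw [← Measure.map_apply BurkeProof.measurable_burkeT hA, BurkeProof.map_T hμ hp hp1]

end
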